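/- arXiv:2601.13900 — 8 statements merged into one kernel-verified Lean document; each statement's English description precedes it below -/
import Mathlib

section
/- Any partition of the edges of the complete graph K_n on n vertices into complete bipartite graphs (bicliques) uses at least n−1 bicliques. -/
open Finset

/-- **Graham–Pollak theorem.** Any partition of the edges of the complete graph `K_n`
into bicliques (complete bipartite graphs, given by disjoint vertex sets `A t`, `B t`,
each edge of `K_n` lying in exactly one biclique) uses at least `n - 1` bicliques. -/
theorem graham_pollak (n k : ℕ) (A B : Fin k → Set (Fin n))
    (hdisj : ∀ t, Disjoint (A t) (B t))
    (hpart : ∀ i j : Fin n, i ≠ j →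
      ∃! t, (i ∈ A t ∧ j ∈ B t) ∨ (j ∈ A t ∧ i ∈ B t)) :
    n - 1 ≤ k := by
  classical
  by_contra hk
  push_neg at hk
  have hkn : k + 1 < n := by omega
  -- the linear map recording the sums over each `A t` together with the total sum
  let SA : Fin k → (Fin n → ℝ) →ₗ[ℝ] ℝ := fun t =>
    ∑ i ∈ univ.filter (fun i => i ∈ A t), LinearMap.proj i
  let Ssum : (Fin n → ℝ) →ₗ[ℝ] ℝ := ∑ i : Fin n, LinearMap.proj i
  let f : (Fin n → ℝ) →ₗ[ℝ] (Fin k → ℝ) × ℝ := (LinearMap.pi SA).prod Ssum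
  -- its kernel is nontrivial since k + 1 < n
  have hker : ∃ x : Fin n → ℝ, x ≠ 0 ∧ f x = 0 := by
    have h1 := LinearMap.finrank_range_add_finrank_ker f
    have h2 : Module.finrank ℝ (LinearMap.range f) ≤ k + 1 := by
      have h3 := Submodule.finrank_le (LinearMap.range f)
      simpa using h3
    have h4 : Module.finrank ℝ (Fin n → ℝ) = n := by simp
    have h5 : Module.finrank ℝ (LinearMap.ker f) ≠ 0 := by omega
    have h6 : LinearMap.ker f ≠ ⊥ := by
      intro h
      rw [h] at h5
      simp at h5
    obtain ⟨x, hx, hx0⟩ := Submodule.ne_bot_iff _ |>.mp h6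
    exact ⟨x, hx0, hx⟩
  obtain ⟨x, hx0, hfx⟩ := hker
  have hA : ∀ t, ∑ i ∈ univ.filter (fun i => i ∈ A t), x i = 0 := by
    intro t
    have := congrArg (fun p => p.1 t) hfx
    simpa [f, SA, LinearMap.pi_apply, LinearMap.sum_apply] using this
  have hS : ∑ i : Fin n, x i = 0 := by
    have := congrArg Prod.snd hfx
    simpa [f, Ssum, LinearMap.sum_apply] using this
  -- counting: m i j = number of bicliques with i on the A side and j on the B side
  let m : Fin n → Fin n → ℕ := fun i j => (univ.filter (fun t => i ∈ A t ∧ j ∈ B t)).card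
  have hm0 : ∀ i, m i i = 0 := by
    intro i
    simp only [m, Finset.card_eq_zero, filter_eq_empty_iff]
    intro t _
    rintro ⟨h1, h2⟩
    exact (hdisj t).ne_of_mem h1 h2 rfl
  have hm1 : ∀ i j, i ≠ j → m i j + m j i = 1 := by
    intro i j hij
    obtain ⟨t₀, ht₀, huniq⟩ := hpart i j hij
    have hdis : Disjoint (univ.filter (fun t => i ∈ A t ∧ j ∈ B t))
        (univ.filter (fun t => j ∈ A t ∧ i ∈ B t)) := by
      rw [Finset.disjoint_filter]
      rintro t _ ⟨h1, h2⟩ ⟨h3, h4⟩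
      exact (hdisj t).ne_of_mem h1 h4 rfl
    have hunion : univ.filter (fun t => i ∈ A t ∧ j ∈ B t) ∪
        univ.filter (fun t => j ∈ A t ∧ i ∈ B t) = {t₀} := by
      ext t
      simp only [Finset.mem_union, Finset.mem_filter, Finset.mem_singleton, mem_univ, true_and]
      constructor
      · intro h
        exact huniq t h
      · intro h
        subst h
        exact ht₀
    have := Finset.card_union_of_disjoint hdis
    rw [hunion, Finset.card_singleton] at this
    exact this.symm
  -- the key double sum
  have key : ∑ i : Fin n, ∑ j : Fin n, ((m i j : ℝ) + (m j i : ℝ)) * (x i * x j) = 0 := by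
    have step : ∀ i j : Fin n,
        ∑ t : Fin k, (if i ∈ A t then x i else 0) * (if j ∈ B t then x j else 0)
          = (m i j : ℝ) * (x i * x j) := by
      intro i j
      calc ∑ t : Fin k, (if i ∈ A t then x i else 0) * (if j ∈ B t then x j else 0)
          = ∑ t : Fin k, (if i ∈ A t ∧ j ∈ B t then x i * x j else 0) := by
            refine Finset.sum_congr rfl fun t _ => ?_
            by_cases h1 : i ∈ A t <;> by_cases h2 : j ∈ B t <;> simp [h1, h2]
        _ = ∑ t ∈ univ.filter (fun t => i ∈ A t ∧ j ∈ B t), x i * x j := by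
            rw [Finset.sum_filter]
        _ = (m i j : ℝ) * (x i * x j) := by
            rw [Finset.sum_const, nsmul_eq_mul]
    have main : ∑ i : Fin n, ∑ j : Fin n, (m i j : ℝ) * (x i * x j) = 0 := by
      calc ∑ i : Fin n, ∑ j : Fin n, (m i j : ℝ) * (x i * x j)
          = ∑ i : Fin n, ∑ j : Fin n, ∑ t : Fin k,
              (if i ∈ A t then x i else 0) * (if j ∈ B t then x j else 0) := by
            refine Finset.sum_congr rfl fun i _ => Finset.sum_congr rfl fun j _ => ?_
            rw [step]
        _ = ∑ t : Fin k, ∑ i : Fin n, ∑ j : Fin n,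
              (if i ∈ A t then x i else 0) * (if j ∈ B t then x j else 0) := by
            calc ∑ i : Fin n, ∑ j : Fin n, ∑ t : Fin k,
                  (if i ∈ A t then x i else 0) * (if j ∈ B t then x j else 0)
                = ∑ i : Fin n, ∑ t : Fin k, ∑ j : Fin n,
                  (if i ∈ A t then x i else 0) * (if j ∈ B t then x j else 0) :=
                  Finset.sum_congr rfl fun i _ => Finset.sum_comm
              _ = ∑ t : Fin k, ∑ i : Fin n, ∑ j : Fin n,
                  (if i ∈ A t then x i else 0) * (if j ∈ B t then x j else 0) :=
                  Finset.sum_comm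
        _ = ∑ t : Fin k, (∑ i ∈ univ.filter (fun i => i ∈ A t), x i)
              * (∑ j ∈ univ.filter (fun j => j ∈ B t), x j) := by
            refine Finset.sum_congr rfl fun t _ => ?_
            rw [Finset.sum_filter, Finset.sum_filter, Finset.sum_mul_sum]
        _ = 0 := by
            refine Finset.sum_eq_zero fun t _ => ?_
            rw [hA t, zero_mul]
    have main' : ∑ i : Fin n, ∑ j : Fin n, (m j i : ℝ) * (x i * x j) = 0 := by
      rw [Finset.sum_comm]
      calc ∑ j : Fin n, ∑ i : Fin n, (m j i : ℝ) * (x i * x j)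
          = ∑ j : Fin n, ∑ i : Fin n, (m j i : ℝ) * (x j * x i) := by
            refine Finset.sum_congr rfl fun j _ => Finset.sum_congr rfl fun i _ => ?_
            ring
        _ = 0 := main
    calc ∑ i : Fin n, ∑ j : Fin n, ((m i j : ℝ) + (m j i : ℝ)) * (x i * x j)
        = ∑ i : Fin n, ∑ j : Fin n, ((m i j : ℝ) * (x i * x j) + (m j i : ℝ) * (x i * x j)) := by
          refine Finset.sum_congr rfl fun i _ => Finset.sum_congr rfl fun j _ => ?_
          ring
      _ = 0 := by
          simp only [Finset.sum_add_distrib]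
          rw [main, main', add_zero]
  -- but the double sum evaluates to -∑ xᵢ²
  have key2 : ∑ i : Fin n, ∑ j : Fin n, ((m i j : ℝ) + (m j i : ℝ)) * (x i * x j)
      = - ∑ i : Fin n, x i * x i := by
    have inner : ∀ i : Fin n,
        ∑ j : Fin n, ((m i j : ℝ) + (m j i : ℝ)) * (x i * x j) = - (x i * x i) := by
      intro i
      calc ∑ j : Fin n, ((m i j : ℝ) + (m j i : ℝ)) * (x i * x j)
          = ∑ j : Fin n, (if j = i then 0 else x i * x j) := by
            refine Finset.sum_congr rfl fun j _ => ?_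
            by_cases hji : j = i
            · subst hji
              rw [hm0 j]
              simp
            · have := hm1 i j (fun h => hji h.symm)
              have hc : (m i j : ℝ) + (m j i : ℝ) = 1 := by
                exact_mod_cast congrArg (fun z : ℕ => (z : ℝ)) this
              rw [hc, one_mul, if_neg hji]
        _ = (∑ j : Fin n, x i * x j) - x i * x i := by
            have h8 : ∑ j : Fin n, (if j = i then x i * x j else 0) = x i * x i := by
              simp
            have h9 : ∀ j : Fin n, (if j = i then 0 else x i * x j)
                = x i * x j - (if j = i then x i * x j else 0) := by
              intro j; split_ifs <;> ring
            rw [Finset.sum_congr rfl fun j _ => h9 j, Finset.sum_sub_distrib, h8]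
        _ = - (x i * x i) := by
            rw [← Finset.mul_sum, hS, mul_zero, zero_sub]
    rw [Finset.sum_congr rfl fun i _ => inner i, ← Finset.sum_neg_distrib]
  -- conclude x = 0, contradiction
  have hsq : ∑ i : Fin n, x i * x i = 0 := by
    have := key2.symm.trans key
    linarith [this]
  have hxz : x = 0 := by
    funext i
    have hnn : ∀ j ∈ (univ : Finset (Fin n)), 0 ≤ x j * x j := fun j _ => mul_self_nonneg _
    have h10 := (Finset.sum_eq_zero_iff_of_nonneg hnn).mp hsq i (mem_univ i)
    simpa using mul_self_eq_zero.mp h10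
  exact hx0 hxz
end

section
/- If F is an isolation set of order k in a 0,1 matrix M (meaning no k+1 elements of F lie in a common monochromatic all-ones rectangle of M), then the Boolean rank and the binary rank of M are each at least |F|/k. -/
open Function Set

section Defs

variable {α β : Type*}

/-- A `0,1` matrix with integer entries. -/
def ZeroOne (M : Matrix α β ℤ) : Prop := ∀ i j, M i j = 0 ∨ M i j = 1

/-- A monochromatic all-ones combinatorial rectangle of `M`. -/
def IsOnesRect (M : Matrix α β ℤ) (S : Set (α × β)) : Prop :=
  (∃ (R : Set α) (C : Set β), S = R ×ˢ C) ∧ ∀ p ∈ S, M p.1 p.2 = 1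

/-- The set of `1`-entries of `M`. -/
def onesOf (M : Matrix α β ℤ) : Set (α × β) := {p | M p.1 p.2 = 1}

/-- Minimum number of monochromatic all-ones rectangles covering the ones of `M`. -/
noncomputable def coverNum (M : Matrix α β ℤ) : ℕ :=
  sInf {k | ∃ f : Fin k → Set (α × β), (∀ t, IsOnesRect M (f t)) ∧ (⋃ t, f t) = onesOf M}

/-- Minimum number of pairwise disjoint monochromatic all-ones rectangles
partitioning the ones of `M`. -/
noncomputable def partitionNum (M : Matrix α β ℤ) : ℕ :=
  sInf {k | ∃ f : Fin k → Set (α × β), (∀ t, IsOnesRect M (f t)) ∧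
    (Pairwise fun s t => Disjoint (f s) (f t)) ∧ (⋃ t, f t) = onesOf M}

end Defs


open Classical in
lemma counting_aux {n m : ℕ} (M : Matrix (Fin n) (Fin m) ℤ) (k : ℕ)
    (F : Finset (Fin n × Fin m)) (hones : ∀ p ∈ F, M p.1 p.2 = 1)
    (horder : ∀ S : Set (Fin n × Fin m), IsOnesRect M S →
      ∀ T : Finset (Fin n × Fin m), T ⊆ F → (↑T : Set (Fin n × Fin m)) ⊆ S →
        T.card ≤ k)
    (N : ℕ) (f : Fin N → Set (Fin n × Fin m)) (hrect : ∀ t, IsOnesRect M (f t))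
    (hcov : (⋃ t, f t) = onesOf M) : F.card ≤ N * k := by
  have hsub : F ⊆ Finset.univ.biUnion fun t : Fin N =>
      F.filter (fun p => p ∈ f t) := by
    intro p hp
    have : p ∈ onesOf M := hones p hp
    rw [← hcov] at this
    obtain ⟨t, ht⟩ := Set.mem_iUnion.mp this
    exact Finset.mem_biUnion.mpr ⟨t, Finset.mem_univ _, Finset.mem_filter.mpr ⟨hp, ht⟩⟩
  calc F.card ≤ (Finset.univ.biUnion fun t : Fin N =>
        F.filter (fun p => p ∈ f t)).card := Finset.card_le_card hsub
    _ ≤ ∑ t : Fin N, (F.filter (fun p => p ∈ f t)).card := Finset.card_biUnion_le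
    _ ≤ ∑ _t : Fin N, k := by
        apply Finset.sum_le_sum
        intro t _
        refine horder (f t) (hrect t) _ (Finset.filter_subset _ _) ?_
        intro p hp
        exact (Finset.mem_filter.mp hp).2
    _ = N * k := by simp [mul_comm]

lemma nonempty_aux {n m : ℕ} (M : Matrix (Fin n) (Fin m) ℤ) :
    ∃ N, ∃ f : Fin N → Set (Fin n × Fin m), (∀ t, IsOnesRect M (f t)) ∧
      (Pairwise fun s t => Disjoint (f s) (f t)) ∧ (⋃ t, f t) = onesOf M := by
  classical
  set O : Finset (Fin n × Fin m) := Finset.univ.filter (fun p => M p.1 p.2 = 1) with hO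
  have e := O.equivFin
  refine ⟨O.card, fun t => {(e.symm t : Fin n × Fin m)}, ?_, ?_, ?_⟩
  · intro t
    refine ⟨⟨{(e.symm t : Fin n × Fin m).1}, {(e.symm t : Fin n × Fin m).2}, ?_⟩, ?_⟩
    · ext p; simp [Set.mem_prod, Prod.ext_iff]
    · intro p hp
      rcases hp with rfl
      have := (e.symm t).2
      simpa [hO] using (Finset.mem_filter.mp this).2
  · intro s t hst
    simp only [Set.disjoint_singleton_left, Set.mem_singleton_iff]
    intro h
    exact hst (e.symm.injective (Subtype.ext h))
  · ext p
    simp only [Set.mem_iUnion, Set.mem_singleton_iff, onesOf, Set.mem_setOf_eq]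
    constructor
    · rintro ⟨t, rfl⟩
      have := (e.symm t).2
      simpa [hO] using (Finset.mem_filter.mp this).2
    · intro h
      have hp : p ∈ O := Finset.mem_filter.mpr ⟨Finset.mem_univ _, h⟩
      exact ⟨e ⟨p, hp⟩, by simp⟩

/-- If `F` is an isolation set of order `k` in a `0,1` matrix `M` (a set of
`1`-entries such that no `k+1` of its elements lie in a common monochromatic
all-ones rectangle), then the Boolean rank and the binary rank of `M` are each
at least `|F| / k`. -/
theorem order_k_isolation_bound {n m : ℕ} (M : Matrix (Fin n) (Fin m) ℤ)
    (hM : ZeroOne M) (k : ℕ) (F : Finset (Fin n × Fin m))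
    (hones : ∀ p ∈ F, M p.1 p.2 = 1)
    (horder : ∀ S : Set (Fin n × Fin m), IsOnesRect M S →
      ∀ T : Finset (Fin n × Fin m), T ⊆ F → (↑T : Set (Fin n × Fin m)) ⊆ S →
        T.card ≤ k) :
    (F.card : ℝ) / k ≤ coverNum M ∧ (F.card : ℝ) / k ≤ partitionNum M := by
  have key : ∀ N : ℕ, (∃ f : Fin N → Set (Fin n × Fin m), (∀ t, IsOnesRect M (f t)) ∧
      (⋃ t, f t) = onesOf M) → (F.card : ℝ) / k ≤ N := by
    intro N ⟨f, hrect, hcov⟩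
    have h := counting_aux M k F hones horder N f hrect hcov
    rcases Nat.eq_zero_or_pos k with rfl | hk
    · simp
    · rw [div_le_iff₀ (by exact_mod_cast hk)]
      exact_mod_cast h
  obtain ⟨N0, f0, hf0, hd0, hc0⟩ := nonempty_aux M
  constructor
  · have hmem : coverNum M ∈ {N | ∃ f : Fin N → Set (Fin n × Fin m),
        (∀ t, IsOnesRect M (f t)) ∧ (⋃ t, f t) = onesOf M} :=
      Nat.sInf_mem ⟨N0, f0, hf0, hc0⟩
    exact key _ hmem
  · have hmem : partitionNum M ∈ {N | ∃ f : Fin N → Set (Fin n × Fin m),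
        (∀ t, IsOnesRect M (f t)) ∧ (Pairwise fun s t => Disjoint (f s) (f t)) ∧
        (⋃ t, f t) = onesOf M} :=
      Nat.sInf_mem ⟨N0, f0, hf0, hd0, hc0⟩
    obtain ⟨f, hf, _, hc⟩ := hmem
    exact key _ ⟨f, hf, hc⟩
end

section
/- Let n > k ≥ ⌊n/2⌋ and let D_{n,k} be the n×n circulant 0,1 matrix whose first row consists of n−k ones followed by k zeros. Then the n diagonal entries of D_{n,k} (which equal 1) form an isolation set of size n, and consequently the Boolean rank and binary rank of D_{n,k} both equal n. -/
open Function Set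

/-- An isolation set in a `0,1` matrix `M`: a set of `1`-entries, no two sharing a
row or a column, and no two lying in a common all-ones `2 × 2` submatrix. -/
def IsIsolationSet {α β : Type*} (M : Matrix α β ℤ) (F : Set (α × β)) : Prop :=
  (∀ p ∈ F, M p.1 p.2 = 1) ∧
  ∀ p ∈ F, ∀ q ∈ F, p ≠ q →
    p.1 ≠ q.1 ∧ p.2 ≠ q.2 ∧ ¬(M p.1 q.2 = 1 ∧ M q.1 p.2 = 1)

/-- The circulant matrix `D_{n,k}`: its `(i,j)` entry is `1` iff
`(j - i) mod n ∈ {0, 1, ..., n - k - 1}`. -/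
def Dmat (n k : ℕ) : Matrix (Fin n) (Fin n) ℤ :=
  fun i j => if (j.val + n - i.val) % n < n - k then 1 else 0


lemma key_arith (n k i j : ℕ) (hkn : k < n) (hk : n/2 ≤ k) (hi : i < n) (hj : j < n)
    (hij : i ≠ j) (h1 : (j + n - i) % n < n - k) (h2 : (i + n - j) % n < n - k) : False := by
  rcases Nat.lt_or_ge i j with h | h
  · have a : (j + n - i) % n = j - i := by
      have e : j + n - i = n + (j - i) := by omega
      rw [e, Nat.add_mod_left, Nat.mod_eq_of_lt (by omega)]
    have b : (i + n - j) % n = i + n - j := Nat.mod_eq_of_lt (by omega)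
    omega
  · have h' : j < i := by omega
    have a : (i + n - j) % n = i - j := by
      have e : i + n - j = n + (i - j) := by omega
      rw [e, Nat.add_mod_left, Nat.mod_eq_of_lt (by omega)]
    have b : (j + n - i) % n = j + n - i := Nat.mod_eq_of_lt (by omega)
    omega

lemma Dmat_diag_one (n k : ℕ) (hkn : k < n) (i : Fin n) : Dmat n k i i = 1 := by
  have h0 : (i.val + n - i.val) % n = 0 := by
    rw [Nat.add_sub_cancel_left, Nat.mod_self]
  simp only [Dmat, h0]
  rw [if_pos (by omega)]

lemma key_notboth (n k : ℕ) (hkn : k < n) (hk : n/2 ≤ k) (i j : Fin n) (hij : i ≠ j) :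
    ¬(Dmat n k i j = 1 ∧ Dmat n k j i = 1) := by
  rintro ⟨h1, h2⟩
  simp only [Dmat] at h1 h2
  split_ifs at h1 h2 with ha hb
  · exact key_arith n k i.val j.val hkn hk i.isLt j.isLt
      (fun h => hij (Fin.ext h)) ha hb
  all_goals simp_all

lemma Dmat_lower (n k : ℕ) (hkn : k < n) (hk : n/2 ≤ k) (m : ℕ)
    (f : Fin m → Set (Fin n × Fin n)) (hrect : ∀ t, IsOnesRect (Dmat n k) (f t))
    (hcov : (⋃ t, f t) = onesOf (Dmat n k)) : n ≤ m := by
  have hmem : ∀ i : Fin n, ∃ t, (i, i) ∈ f t := by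
    intro i
    have h : (i, i) ∈ onesOf (Dmat n k) := Dmat_diag_one n k hkn i
    rw [← hcov] at h
    simpa using h
  choose g hg using hmem
  have hinj : Function.Injective g := by
    intro i j h
    by_contra hij
    obtain ⟨⟨R, C, hRC⟩, hones⟩ := hrect (g i)
    have hi := hg i
    have hj := hg j
    rw [← h] at hj
    rw [hRC] at hi hj
    have hij1 : ((i : Fin n), (j : Fin n)) ∈ f (g i) := by
      rw [hRC]; exact ⟨hi.1, hj.2⟩
    have hij2 : ((j : Fin n), (i : Fin n)) ∈ f (g i) := by
      rw [hRC]; exact ⟨hj.1, hi.2⟩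
    exact key_notboth n k hkn hk i j hij ⟨hones _ hij1, hones _ hij2⟩
  calc n = Fintype.card (Fin n) := (Fintype.card_fin n).symm
    _ ≤ Fintype.card (Fin m) := Fintype.card_le_of_injective g hinj
    _ = m := Fintype.card_fin m

lemma Dmat_rows (n k : ℕ) :
    ∃ f : Fin n → Set (Fin n × Fin n), (∀ t, IsOnesRect (Dmat n k) (f t)) ∧
      (Pairwise fun s t => Disjoint (f s) (f t)) ∧ (⋃ t, f t) = onesOf (Dmat n k) := by
  refine ⟨fun i => {i} ×ˢ {j | Dmat n k i j = 1}, ?_, ?_, ?_⟩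
  · intro i
    refine ⟨⟨{i}, {j | Dmat n k i j = 1}, rfl⟩, ?_⟩
    rintro ⟨a, b⟩ ⟨ha, hb⟩
    simp only [Set.mem_singleton_iff] at ha
    subst ha
    exact hb
  · intro s t hst
    rw [Set.disjoint_left]
    rintro ⟨a, b⟩ ⟨ha, -⟩ ⟨ha', -⟩
    simp only [Set.mem_singleton_iff] at ha ha'
    exact hst (ha ▸ ha')
  · ext ⟨a, b⟩
    simp [onesOf, Set.mem_prod]

/-- For `n > k ≥ ⌊n/2⌋`, the `n` diagonal entries of `D_{n,k}` form an isolation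
set of size `n`, and consequently the Boolean rank and the binary rank of
`D_{n,k}` both equal `n`. -/
theorem Dmat_diag_isolation (n k : ℕ) (hkn : k < n) (hk : n / 2 ≤ k) :
    IsIsolationSet (Dmat n k) {p : Fin n × Fin n | p.1 = p.2} ∧
    Set.ncard {p : Fin n × Fin n | p.1 = p.2} = n ∧
    coverNum (Dmat n k) = n ∧ partitionNum (Dmat n k) = n := by
  obtain ⟨f, hrect, hdisj, hcov⟩ := Dmat_rows n k
  have hcoverNum : coverNum (Dmat n k) = n := by
    apply le_antisymm
    · exact Nat.sInf_le ⟨f, hrect, hcov⟩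
    · have hne : {m | ∃ g : Fin m → Set (Fin n × Fin n), (∀ t, IsOnesRect (Dmat n k) (g t)) ∧
          (⋃ t, g t) = onesOf (Dmat n k)}.Nonempty := ⟨n, f, hrect, hcov⟩
      obtain ⟨g, hg1, hg2⟩ := Nat.sInf_mem hne
      exact Dmat_lower n k hkn hk _ g hg1 hg2
  have hpartNum : partitionNum (Dmat n k) = n := by
    apply le_antisymm
    · exact Nat.sInf_le ⟨f, hrect, hdisj, hcov⟩
    · have hne : {m | ∃ g : Fin m → Set (Fin n × Fin n), (∀ t, IsOnesRect (Dmat n k) (g t)) ∧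
          (Pairwise fun s t => Disjoint (g s) (g t)) ∧
          (⋃ t, g t) = onesOf (Dmat n k)}.Nonempty := ⟨n, f, hrect, hdisj, hcov⟩
      obtain ⟨g, hg1, -, hg2⟩ := Nat.sInf_mem hne
      exact Dmat_lower n k hkn hk _ g hg1 hg2
  refine ⟨⟨?_, ?_⟩, ?_, hcoverNum, hpartNum⟩
  · rintro ⟨a, b⟩ hab
    simp only [Set.mem_setOf_eq] at hab
    subst hab
    exact Dmat_diag_one n k hkn a
  · rintro ⟨a, b⟩ hab ⟨c, d⟩ hcd hne
    simp only [Set.mem_setOf_eq] at hab hcd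
    subst hab; subst hcd
    have hac : a ≠ c := fun h => hne (by rw [h])
    exact ⟨hac, hac, key_notboth n k hkn hk a c hac⟩
  · have himg : {p : Fin n × Fin n | p.1 = p.2} = (fun i : Fin n => (i, i)) '' Set.univ := by
      ext ⟨a, b⟩
      simp only [Set.mem_setOf_eq, Set.image_univ, Set.mem_range, Prod.mk.injEq]
      constructor
      · rintro rfl; exact ⟨a, rfl, rfl⟩
      · rintro ⟨i, rfl, rfl⟩; rfl
    rw [himg, Set.ncard_image_of_injective _ (fun i j h => (Prod.mk.injEq _ _ _ _ ▸ h).1),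
      Set.ncard_univ, Nat.card_eq_fintype_card, Fintype.card_fin]
end

section
/- Let M be a 0,1 matrix of size n×m whose rows, viewed as subsets of {1,...,m}, form an antichain (no row's support is contained in another row's support). Then the Boolean rank of M is at least σ(n), where σ(n) is the least d with n ≤ C(d, ⌊d/2⌋). -/
open Function Set

/-- The Boolean rank of a `0,1` matrix: the minimal `d` such that `M = X * Y` for
`0,1` matrices under Boolean arithmetic. -/
noncomputable def boolFactRank {n m : ℕ} (M : Matrix (Fin n) (Fin m) ℤ) : ℕ :=
  sInf {d | ∃ (X : Matrix (Fin n) (Fin d) ℤ) (Y : Matrix (Fin d) (Fin m) ℤ),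
    ZeroOne X ∧ ZeroOne Y ∧ ∀ i j, M i j = 1 ↔ ∃ t, X i t = 1 ∧ Y t j = 1}

/-- `σ(n)` is the least `d` with `n ≤ C(d, ⌊d/2⌋)`. -/
noncomputable def sigmaFn (n : ℕ) : ℕ := sInf {d | n ≤ Nat.choose d (d / 2)}

/-- If the rows of a `0,1` matrix `M`, viewed as subsets of the columns via
their supports, form an antichain (no row's support is contained in another
row's support), then the Boolean rank of `M` is at least `σ(n)`. -/
theorem antichain_boolRank_lower {n m : ℕ} (M : Matrix (Fin n) (Fin m) ℤ)
    (hM : ZeroOne M)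
    (hanti : ∀ i i' : Fin n, i ≠ i' → ¬ ∀ j, M i j = 1 → M i' j = 1) :
    sigmaFn n ≤ boolFactRank M := by
  classical
  -- the defining set of boolFactRank is nonempty (take d = m, Y = identity)
  have hne : {d | ∃ (X : Matrix (Fin n) (Fin d) ℤ) (Y : Matrix (Fin d) (Fin m) ℤ),
      ZeroOne X ∧ ZeroOne Y ∧ ∀ i j, M i j = 1 ↔ ∃ t, X i t = 1 ∧ Y t j = 1}.Nonempty := by
    refine ⟨m, M, fun t j => if t = j then 1 else 0, hM, ?_, ?_⟩
    · intro t j; by_cases h : t = j <;> simp [h]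
    · intro i j
      constructor
      · intro h; exact ⟨j, h, by simp⟩
      · rintro ⟨t, ht, hy⟩
        by_cases h : t = j
        · subst h; exact ht
        · simp [h] at hy
  have hmem := Nat.sInf_mem hne
  obtain ⟨X, Y, hX, hY, hfac⟩ := hmem
  set d := boolFactRank M with hd
  -- row supports of X
  set f : Fin n → Finset (Fin d) := fun i => Finset.univ.filter (fun t => X i t = 1) with hf
  have hsub : ∀ i i' : Fin n, f i ⊆ f i' → ∀ j, M i j = 1 → M i' j = 1 := by
    intro i i' hss j hij
    obtain ⟨t, ht, hy⟩ := (hfac i j).1 hij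
    have : t ∈ f i := by exact (@Finset.mem_filter _ (fun t => X i t = 1) (fun _ => Classical.propDecidable _) Finset.univ t).2 ⟨Finset.mem_univ t, ht⟩
    have ht' : X i' t = 1 := by have := hss this; exact (Finset.mem_filter.1 this).2
    exact (hfac i' j).2 ⟨t, ht', hy⟩
  have hinj : Function.Injective f := by
    intro i i' h
    by_contra hne'
    exact hanti i i' hne' (hsub i i' (le_of_eq h))
  have hanti' : IsAntichain (· ⊆ ·) ((Finset.univ.image f : Finset (Finset (Fin d))) : Set (Finset (Fin d))) := by
    rintro A hA B hB hAB hss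
    simp only [Finset.coe_image, Finset.coe_univ, Set.image_univ] at hA hB
    obtain ⟨i, rfl⟩ := hA
    obtain ⟨i', rfl⟩ := hB
    have hii' : i ≠ i' := fun h => hAB (by rw [h])
    exact hanti i i' hii' (hsub i i' hss)
  have hcard : (Finset.univ.image f).card = n := by
    rw [Finset.card_image_of_injective _ hinj, Finset.card_univ, Fintype.card_fin]
  have := IsAntichain.sperner hanti'
  rw [hcard] at this
  simp only [Fintype.card_fin] at this
  exact Nat.sInf_le this
end

section
/- Let C_n be the n×n 0,1 matrix with zeros on the main diagonal and ones elsewhere (the complement of the identity matrix), n ≥ 2. Then the Boolean rank of C_n equals σ(n), the least d with n ≤ C(d, ⌊d/2⌋). -/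
open Function Set

/-- The matrix `C_n`: zeros on the main diagonal and ones elsewhere. -/
def Cmat (n : ℕ) : Matrix (Fin n) (Fin n) ℤ := fun i j => if i = j then 0 else 1

lemma sigmaFn_spec (n : ℕ) : n ≤ Nat.choose (sigmaFn n) (sigmaFn n / 2) := by
  have hne : {d | n ≤ Nat.choose d (d / 2)}.Nonempty := by
    refine ⟨2 * n, ?_⟩
    have h1 : n ≤ Nat.choose (2 * n) 1 := by
      rw [Nat.choose_one_right]; omega
    have h2 : Nat.choose (2 * n) 1 ≤ Nat.choose (2 * n) ((2 * n) / 2) :=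
      Nat.choose_le_middle 1 (2 * n)
    exact le_trans h1 h2
  exact Nat.sInf_mem hne

/-- The `σ(n)`-dimensional Boolean factorization of `C_n` exists. -/
lemma sigma_mem_boolSet (n : ℕ) :
    sigmaFn n ∈ {d | ∃ (X : Matrix (Fin n) (Fin d) ℤ) (Y : Matrix (Fin d) (Fin n) ℤ),
      ZeroOne X ∧ ZeroOne Y ∧ ∀ i j, (Cmat n) i j = 1 ↔ ∃ t, X i t = 1 ∧ Y t j = 1} := by
  classical
  set d := sigmaFn n with hd
  have hcard : n ≤ Nat.choose d (d / 2) := sigmaFn_spec n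
  set 𝒜 : Finset (Finset (Fin d)) := Finset.univ.powersetCard (d / 2) with h𝒜
  have hAcard : 𝒜.card = Nat.choose d (d / 2) := by
    simp [h𝒜, Finset.card_powersetCard]
  have hle : n ≤ 𝒜.card := by rw [hAcard]; exact hcard
  -- injection from Fin n into 𝒜
  let g : Fin n → {x // x ∈ 𝒜} := fun i => 𝒜.equivFin.symm (Fin.castLE hle i)
  have hginj : Function.Injective g := by
    intro a b hab
    have := 𝒜.equivFin.symm.injective hab
    exact Fin.castLE_injective hle this
  let A : Fin n → Finset (Fin d) := fun i => (g i : Finset (Fin d))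
  have hAinj : Function.Injective A := fun a b hab => hginj (Subtype.ext hab)
  have hAmem : ∀ i, (A i).card = d / 2 := by
    intro i
    exact Finset.mem_powersetCard_univ.mp (g i).2
  refine ⟨fun i t => if t ∈ A i then 1 else 0,
          fun t j => if t ∈ A j then 0 else 1, ?_, ?_, ?_⟩
  · intro i t; by_cases h : t ∈ A i <;> simp [h]
  · intro t j; by_cases h : t ∈ A j <;> simp [h]
  · intro i j
    constructor
    · intro hM
      have hij : i ≠ j := by
        intro h; subst h; simp [Cmat] at hM
      by_contra hcon
      push_neg at hcon
      have hsub : A i ⊆ A j := by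
        intro t ht
        by_contra htj
        have := hcon t
        simp [ht, htj] at this
      have heq : A i = A j :=
        Finset.eq_of_subset_of_card_le hsub (by rw [hAmem, hAmem])
      exact hij (hAinj heq)
    · rintro ⟨t, hx, hy⟩
      have hti : t ∈ A i := by by_contra h; simp [h] at hx
      have htj : t ∉ A j := by intro h; simp [h] at hy
      have hij : i ≠ j := by intro h; subst h; exact htj hti
      simp [Cmat, hij]

/-- Any Boolean factorization dimension `d` of `C_n` satisfies `σ(n) ≤ d`. -/
lemma sigma_le_of_mem (n d : ℕ)
    (hd : ∃ (X : Matrix (Fin n) (Fin d) ℤ) (Y : Matrix (Fin d) (Fin n) ℤ),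
      ZeroOne X ∧ ZeroOne Y ∧ ∀ i j, (Cmat n) i j = 1 ↔ ∃ t, X i t = 1 ∧ Y t j = 1) :
    sigmaFn n ≤ d := by
  classical
  obtain ⟨X, Y, hX, hY, h⟩ := hd
  let F : Fin n → Finset (Fin d) := fun i => Finset.univ.filter (fun t => X i t = 1)
  have hdiag : ∀ j t, X j t = 1 → Y t j ≠ 1 := by
    intro j t hx hy
    have := (h j j).mpr ⟨t, hx, hy⟩
    simp [Cmat] at this
  have hoff : ∀ i j, i ≠ j → ∃ t, X i t = 1 ∧ Y t j = 1 := by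
    intro i j hij
    exact (h i j).mp (by simp [Cmat, hij])
  have hnsub : ∀ i j, i ≠ j → ¬ F i ⊆ F j := by
    intro i j hij hsub
    obtain ⟨t, hx, hy⟩ := hoff i j hij
    have hti : t ∈ F i := by simp [F, hx]
    have htj := hsub hti
    simp only [F, Finset.mem_filter] at htj
    exact hdiag j t htj.2 hy
  have hFinj : Function.Injective F := by
    intro a b hab
    by_contra hne
    exact hnsub a b hne (le_of_eq hab)
  have hanti : IsAntichain (· ⊆ ·)
      ((Finset.univ.image F : Finset (Finset (Fin d))) : Set (Finset (Fin d))) := by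
    intro a ha b hb hab
    simp only [Finset.coe_image, Set.mem_image] at ha hb
    obtain ⟨i, _, rfl⟩ := ha
    obtain ⟨j, _, rfl⟩ := hb
    have hij : i ≠ j := fun hh => hab (by rw [hh])
    exact hnsub i j hij
  have hsp := IsAntichain.sperner hanti
  have hc : (Finset.univ.image F).card = n := by
    rw [Finset.card_image_of_injective _ hFinj, Finset.card_univ, Fintype.card_fin]
  rw [hc] at hsp
  simp only [Fintype.card_fin] at hsp
  exact Nat.sInf_le hsp

/-- For `n ≥ 2`, the Boolean rank of `C_n` equals `σ(n)`, the least `d` with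
`n ≤ C(d, ⌊d/2⌋)`. -/
theorem boolRank_Cmat (n : ℕ) (hn : 2 ≤ n) : boolFactRank (Cmat n) = sigmaFn n := by
  refine le_antisymm (Nat.sInf_le (sigma_mem_boolSet n)) ?_
  have hmem := Nat.sInf_mem ⟨sigmaFn n, sigma_mem_boolSet n⟩
  exact sigma_le_of_mem n _ hmem
end

section
/- Let G be a graph with m edges containing a matching of size s. Then any cover of the edges of G by complete bipartite subgraphs (bicliques) requires at least s²/m bicliques. -/
/-- Let `G` be a graph with `m` edges containing a matching of size `s` (a family
of `s` pairwise vertex-disjoint edges). Then any cover of the edges of `G` by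
complete bipartite subgraphs (bicliques) requires at least `s² / m` bicliques. -/
theorem biclique_cover_lower_bound {V : Type*} [Fintype V] [DecidableEq V]
    (G : SimpleGraph V) [DecidableRel G.Adj] (s r : ℕ)
    (e : Fin s → V × V)
    (hmatch : ∀ t, G.Adj (e t).1 (e t).2)
    (hdisj : ∀ t t', t ≠ t' → (e t).1 ≠ (e t').1 ∧ (e t).1 ≠ (e t').2 ∧
      (e t).2 ≠ (e t').1 ∧ (e t).2 ≠ (e t').2)
    (A B : Fin r → Set V)
    (hbic : ∀ t, ∀ a ∈ A t, ∀ b ∈ B t, G.Adj a b)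
    (hcover : ∀ u v, G.Adj u v →
      ∃ t, (u ∈ A t ∧ v ∈ B t) ∨ (v ∈ A t ∧ u ∈ B t)) :
    (s : ℝ) ^ 2 / (G.edgeFinset.card : ℝ) ≤ (r : ℝ) := by
  rcases Nat.eq_zero_or_pos s with hs | hs
  · subst hs; simp
  have hch : ∀ t : Fin s, ∃ i : Fin r, ∃ q : V × V,
      q.1 ∈ A i ∧ q.2 ∈ B i ∧
      ((q.1 = (e t).1 ∧ q.2 = (e t).2) ∨ (q.1 = (e t).2 ∧ q.2 = (e t).1)) := by
    intro t
    obtain ⟨i, hi⟩ := hcover _ _ (hmatch t)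
    rcases hi with ⟨h1, h2⟩ | ⟨h1, h2⟩
    · exact ⟨i, ((e t).1, (e t).2), h1, h2, Or.inl ⟨rfl, rfl⟩⟩
    · exact ⟨i, ((e t).2, (e t).1), h1, h2, Or.inr ⟨rfl, rfl⟩⟩
  choose f p hA hB hor using hch
  have hne : ∀ t, (p t).1 ≠ (p t).2 := by
    intro t
    rcases hor t with ⟨h1, h2⟩ | ⟨h1, h2⟩ <;> rw [h1, h2]
    · exact (hmatch t).ne
    · exact (hmatch t).ne'
  have haa : ∀ t t', (p t).1 = (p t').1 → t = t' := by
    intro t t' h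
    by_contra hne'
    obtain ⟨q1, q2, q3, q4⟩ := hdisj t t' hne'
    rcases hor t with ⟨h1, _⟩ | ⟨h1, _⟩ <;> rcases hor t' with ⟨h1', _⟩ | ⟨h1', _⟩ <;>
      rw [h1, h1'] at h <;> tauto
  have hbb : ∀ t t', (p t).2 = (p t').2 → t = t' := by
    intro t t' h
    by_contra hne'
    obtain ⟨q1, q2, q3, q4⟩ := hdisj t t' hne'
    rcases hor t with ⟨_, h2⟩ | ⟨_, h2⟩ <;> rcases hor t' with ⟨_, h2'⟩ | ⟨_, h2'⟩ <;>
      rw [h2, h2'] at h <;> tauto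
  have hab : ∀ t t', (p t).1 ≠ (p t').2 := by
    intro t t' h
    rcases eq_or_ne t t' with rfl | hne'
    · exact hne t h
    obtain ⟨q1, q2, q3, q4⟩ := hdisj t t' hne'
    rcases hor t with ⟨h1, _⟩ | ⟨h1, _⟩ <;> rcases hor t' with ⟨_, h2'⟩ | ⟨_, h2'⟩ <;>
      rw [h1, h2'] at h <;> tauto
  set P : Finset (Fin s × Fin s) :=
    Finset.univ.filter (fun q => f q.1 = f q.2) with hP
  have hinj : P.card ≤ G.edgeFinset.card := by
    apply Finset.card_le_card_of_injOn (fun q => s((p q.1).1, (p q.2).2))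
    · intro q hq
      simp only [Finset.mem_coe, hP, Finset.mem_filter] at hq
      rw [Finset.mem_coe, SimpleGraph.mem_edgeFinset, SimpleGraph.mem_edgeSet]
      exact hbic (f q.1) _ (hA q.1) _ (hq.2 ▸ hB q.2)
    · intro q hq q' hq' h
      simp only [Sym2.eq_iff] at h
      rcases h with ⟨h1, h2⟩ | ⟨h1, h2⟩
      · exact Prod.ext (haa _ _ h1) (hbb _ _ h2)
      · exact absurd h1 (hab _ _)
  set k : Fin r → ℕ := fun i => (Finset.univ.filter (fun t => f t = i)).card with hk
  have hcard : P.card = ∑ i : Fin r, k i * k i := by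
    rw [Finset.card_eq_sum_card_fiberwise (f := fun q => f q.1)
      (t := Finset.univ) (fun _ _ => Finset.mem_univ _)]
    refine Finset.sum_congr rfl fun i _ => ?_
    rw [hk, ← Finset.card_product]
    congr 1
    ext q
    simp only [hP, Finset.mem_filter, Finset.mem_product, Finset.mem_univ, true_and]
    constructor
    · rintro ⟨h1, h2⟩; exact ⟨h2, h1 ▸ h2⟩
    · rintro ⟨h1, h2⟩; exact ⟨h1.trans h2.symm, h1⟩
  have hsum : ∑ i : Fin r, k i = s := by
    have := Finset.card_eq_sum_card_fiberwise (s := (Finset.univ : Finset (Fin s)))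
      (t := Finset.univ) (f := f) (fun _ _ => Finset.mem_univ _)
    simpa [hk] using this.symm
  have hcs : (s : ℝ) ^ 2 ≤ (r : ℝ) * P.card := by
    have h := sq_sum_le_card_mul_sum_sq (s := (Finset.univ : Finset (Fin r)))
      (f := fun i => (k i : ℝ))
    rw [← Nat.cast_sum, hsum] at h
    simp only [Finset.card_univ, Fintype.card_fin] at h
    calc (s : ℝ) ^ 2 ≤ (r : ℝ) * ∑ i : Fin r, (k i : ℝ) ^ 2 := h
      _ = (r : ℝ) * P.card := by rw [hcard]; push_cast [pow_two]; rfl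
  have hm : (0 : ℝ) < G.edgeFinset.card := by
    have : s((e ⟨0, hs⟩).1, (e ⟨0, hs⟩).2) ∈ G.edgeFinset := by
      rw [SimpleGraph.mem_edgeFinset, SimpleGraph.mem_edgeSet]; exact hmatch _
    exact_mod_cast Finset.card_pos.mpr ⟨_, this⟩
  rw [div_le_iff₀ hm]
  calc (s : ℝ) ^ 2 ≤ (r : ℝ) * P.card := hcs
    _ ≤ (r : ℝ) * G.edgeFinset.card := by
        apply mul_le_mul_of_nonneg_left _ (by positivity)
        exact_mod_cast hinj
end

section
/- Let M be a 0,1 matrix of size n×n, n ≥ 2, with at most d zeros in each column. Then the Boolean rank of M is at most c(d)·log₂ n, where c(d) = 3e(d+1)/log₂ e. -/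
open Function Set

private lemma card_filter_pi {ι X : Type*} [Fintype ι] [Fintype X] [DecidableEq ι]
    (q : ι → X → Prop) [∀ i, DecidablePred (q i)]
    [DecidablePred fun σ : ι → X => ∀ i, q i (σ i)] :
    (Finset.univ.filter fun σ : ι → X => ∀ i, q i (σ i)).card
      = ∏ i, (Finset.univ.filter fun x => q i x).card := by
  classical
  rw [← Fintype.card_subtype]
  rw [Fintype.card_congr (Equiv.subtypePiEquivPi (p := fun i x => q i x))]
  rw [Fintype.card_pi]
  exact Finset.prod_congr rfl fun i _ => Fintype.card_subtype _

-- main existence lemma: a good family of samples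
private lemma exists_good_family {n d t : ℕ} (M : Matrix (Fin n) (Fin n) ℤ)
    (hlt : ((Finset.univ.filter fun pr : Fin n × Fin n => M pr.1 pr.2 = 1).biUnion
        (fun pr => Finset.univ.filter fun ω : Fin t → Fin n → Fin (d+1) =>
          ∀ s, ¬ (ω s pr.1 = 0 ∧ ∀ k, M k pr.2 = 0 → ω s k ≠ 0))).card
      < Fintype.card (Fin t → Fin n → Fin (d+1))) :
    ∃ ω : Fin t → Fin n → Fin (d+1), ∀ a b : Fin n, M a b = 1 →
      ∃ s, ω s a = 0 ∧ ∀ k, M k b = 0 → ω s k ≠ 0 := by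
  classical
  set B := (Finset.univ.filter fun pr : Fin n × Fin n => M pr.1 pr.2 = 1).biUnion
      (fun pr => Finset.univ.filter fun ω : Fin t → Fin n → Fin (d+1) =>
        ∀ s, ¬ (ω s pr.1 = 0 ∧ ∀ k, M k pr.2 = 0 → ω s k ≠ 0)) with hB
  have : ∃ ω : Fin t → Fin n → Fin (d+1), ω ∉ B := by
    by_contra h
    push_neg at h
    have hsub : (Finset.univ : Finset (Fin t → Fin n → Fin (d+1))) ⊆ B := fun ω _ => h ω
    have := Finset.card_le_card hsub
    rw [Finset.card_univ] at this
    omega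
  obtain ⟨ω, hω⟩ := this
  refine ⟨ω, fun a b hab => ?_⟩
  by_contra hc
  push_neg at hc
  apply hω
  rw [hB]
  refine Finset.mem_biUnion.mpr ⟨(a, b), Finset.mem_filter.mpr ⟨Finset.mem_univ _, hab⟩,
    Finset.mem_filter.mpr ⟨Finset.mem_univ _, fun s hs => ?_⟩⟩
  obtain ⟨k, hk1, hk2⟩ := hc s hs.1
  exact hs.2 k hk1 hk2

set_option maxHeartbeats 1000000 in
private lemma good_sample_count {n d : ℕ} (M : Matrix (Fin n) (Fin n) ℤ)
    (i j : Fin n) (hone : M i j = 1) :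
    (Finset.univ.filter fun σ : Fin n → Fin (d+1) =>
        σ i = 0 ∧ ∀ k, M k j = 0 → σ k ≠ 0).card
      = d ^ (Finset.univ.filter fun k => M k j = 0).card
        * (d+1) ^ (n - 1 - (Finset.univ.filter fun k => M k j = 0).card) := by
  classical
  set Z : Finset (Fin n) := Finset.univ.filter fun k => M k j = 0 with hZ
  have hiZ : i ∉ Z := by simp [hZ, hone]
  have hMij0 : ¬ M i j = 0 := by rw [hone]; norm_num
  have hfilter : (Finset.univ.filter fun σ : Fin n → Fin (d+1) =>
        σ i = 0 ∧ ∀ k, M k j = 0 → σ k ≠ 0)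
      = Finset.univ.filter fun σ : Fin n → Fin (d+1) =>
        ∀ k, (k = i → σ k = 0) ∧ (M k j = 0 → σ k ≠ 0) := by
    apply Finset.filter_congr
    intro σ _
    constructor
    · rintro ⟨h0, h1⟩ k
      exact ⟨fun hk => hk ▸ h0, h1 k⟩
    · intro h
      exact ⟨(h i).1 rfl, fun k => (h k).2⟩
  rw [hfilter, card_filter_pi (fun (k : Fin n) (x : Fin (d+1)) =>
    (k = i → x = 0) ∧ (M k j = 0 → x ≠ 0))]
  have hck : ∀ k : Fin n, (Finset.univ.filter fun x : Fin (d+1) =>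
        (k = i → x = 0) ∧ (M k j = 0 → x ≠ 0)).card
      = if k = i then 1 else if M k j = 0 then d else d+1 := by
    intro k
    by_cases hk : k = i
    · subst hk
      simp [hMij0, Finset.filter_eq']
    · by_cases hz : M k j = 0
      · have heq : (Finset.univ.filter fun x : Fin (d+1) =>
              (k = i → x = 0) ∧ (M k j = 0 → x ≠ 0))
            = Finset.univ.filter fun x : Fin (d+1) => ¬ x = 0 := by
          apply Finset.filter_congr; intro x _; simp [hk, hz]
        rw [heq, Finset.filter_not, Finset.filter_eq', if_neg hk, if_pos hz]
        rw [Finset.card_sdiff_of_subset (by simp)]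
        simp
      · simp [hk, hz]
  simp only [hck]
  rw [← Finset.mul_prod_erase Finset.univ _ (Finset.mem_univ i)]
  rw [if_pos rfl, one_mul]
  have hZsub : Z ⊆ Finset.univ.erase i := by
    intro k hk
    refine Finset.mem_erase.mpr ⟨?_, Finset.mem_univ k⟩
    rintro rfl; exact hiZ hk
  rw [← Finset.prod_sdiff hZsub]
  have h1 : ∀ k ∈ Z, (if k = i then 1 else if M k j = 0 then d else d+1) = d := by
    intro k hk
    have hki : k ≠ i := fun h => hiZ (h ▸ hk)
    have : M k j = 0 := by simpa [hZ] using hk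
    simp [hki, this]
  have h2 : ∀ k ∈ Finset.univ.erase i \ Z,
      (if k = i then 1 else if M k j = 0 then d else d+1) = d + 1 := by
    intro k hk
    obtain ⟨hk1, hk2⟩ := Finset.mem_sdiff.mp hk
    have hki : k ≠ i := (Finset.mem_erase.mp hk1).1
    have : ¬ M k j = 0 := fun h => hk2 (by simp [hZ, h])
    simp [hki, this]
  rw [Finset.prod_congr rfl h1, Finset.prod_congr rfl h2,
    Finset.prod_const, Finset.prod_const]
  have hcards : (Finset.univ.erase i \ Z).card = n - 1 - Z.card := by
    rw [Finset.card_sdiff_of_subset hZsub, Finset.card_erase_of_mem (Finset.mem_univ i)]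
    simp
  rw [hcards, mul_comm]


private lemma pow_le_exp_mul_pow {d z : ℕ} (hz : z ≤ d) :
    ((d:ℝ)+1)^z ≤ Real.exp 1 * (d:ℝ)^z := by
  have hE1 : (1:ℝ) ≤ Real.exp 1 := by nlinarith [Real.add_one_le_exp (1:ℝ)]
  rcases Nat.eq_zero_or_pos d with hd | hd
  · have : z = 0 := by omega
    subst this; simpa using hE1
  · have hd0 : (0:ℝ) < d := by exact_mod_cast hd
    have h1 : ((d:ℝ)+1) ≤ d * Real.exp (1/d) := by
      have h := Real.add_one_le_exp (1/(d:ℝ))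
      have h2 := mul_le_mul_of_nonneg_left h hd0.le
      calc (d:ℝ)+1 = d * (1/d + 1) := by field_simp; ring
        _ ≤ d * Real.exp (1/d) := h2
    calc ((d:ℝ)+1)^z ≤ (d * Real.exp (1/d))^z := pow_le_pow_left₀ (by positivity) h1 z
      _ = (d:ℝ)^z * Real.exp (1/d)^z := mul_pow _ _ _
      _ = (d:ℝ)^z * Real.exp (z * (1/d)) := by rw [Real.exp_nat_mul]
      _ ≤ (d:ℝ)^z * Real.exp 1 := by
          have hle : (z:ℝ) * (1/d) ≤ 1 := by
            rw [mul_one_div, div_le_one hd0]; exact_mod_cast hz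
          exact mul_le_mul_of_nonneg_left (Real.exp_le_exp.mpr hle) (by positivity)
      _ = Real.exp 1 * (d:ℝ)^z := mul_comm _ _

private lemma exp_half_lt_two : Real.exp (1/2) < 2 := by
  have hh : Real.exp (1/2) * Real.exp (1/2) = Real.exp 1 := by
    rw [← Real.exp_add]; norm_num
  nlinarith [Real.exp_one_lt_d9, Real.exp_pos (1/2:ℝ)]

set_option maxHeartbeats 2000000 in
/-- Let `M` be an `n × n` `0,1` matrix, `n ≥ 2`, with at most `d` zeros in each
column. Then the Boolean rank of `M` is at most `c(d) · log₂ n`, where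
`c(d) = 3e(d+1) / log₂ e`. -/
theorem boolRank_le_of_few_zeros {n : ℕ} (hn : 2 ≤ n) (d : ℕ)
    (M : Matrix (Fin n) (Fin n) ℤ) (hM : ZeroOne M)
    (hcol : ∀ j, (Finset.univ.filter fun i => M i j = 0).card ≤ d) :
    (coverNum M : ℝ) ≤
      (3 * Real.exp 1 * (d + 1) / Real.logb 2 (Real.exp 1)) * Real.logb 2 n := by
  classical
  have hn0 : (0:ℝ) < n := by positivity
  have hn2 : (2:ℝ) ≤ n := by exact_mod_cast hn
  have hlog2 : (0:ℝ) < Real.log 2 := Real.log_pos (by norm_num)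
  have hRHS : (3 * Real.exp 1 * ((d:ℝ) + 1) / Real.logb 2 (Real.exp 1)) * Real.logb 2 n
      = 3 * Real.exp 1 * ((d:ℝ) + 1) * Real.log n := by
    rw [Real.logb, Real.logb, Real.log_exp]
    field_simp
  rw [hRHS]
  set E := Real.exp 1 with hE
  have hE2 : (2:ℝ) ≤ E := by nlinarith [Real.add_one_le_exp (1:ℝ)]
  set L := Real.log n with hLdef
  have hL0 : (0:ℝ) < L := Real.log_pos (by linarith)
  set t := ⌊3 * E * ((d:ℝ)+1) * L⌋₊ with ht
  have hd0 : (0:ℝ) ≤ d := Nat.cast_nonneg d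
  have htle : (t:ℝ) ≤ 3 * E * ((d:ℝ)+1) * L := Nat.floor_le (by positivity)
  have htge : 3 * E * ((d:ℝ)+1) * L - 1 ≤ t := by
    have := Nat.lt_floor_add_one (3 * E * ((d:ℝ)+1) * L); rw [← ht] at this; linarith
  suffices hcov : coverNum M ≤ t by
    calc (coverNum M : ℝ) ≤ t := by exact_mod_cast hcov
      _ ≤ _ := htle
  -- probability setup
  set N := (d+1)^n with hN
  have hNpos : 0 < N := pow_pos (Nat.succ_pos d) n
  set p' := 1 / (E * ((d:ℝ)+1)) with hp'
  have hEd1 : (1:ℝ) ≤ E * ((d:ℝ)+1) := by nlinarith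
  have hp'0 : (0:ℝ) < p' := by rw [hp']; positivity
  have hp'half : p' ≤ 1/2 := by
    rw [hp']
    rw [div_le_div_iff₀ (by linarith) (by norm_num)]
    nlinarith
  have hEdp' : E * ((d:ℝ)+1) * p' = 1 := by
    rw [hp']; field_simp
  -- lower bound on good single samples
  have hglb : ∀ a b : Fin n, M a b = 1 →
      (N:ℝ) * p' ≤ ((Finset.univ.filter fun σ : Fin n → Fin (d+1) =>
        σ a = 0 ∧ ∀ k, M k b = 0 → σ k ≠ 0).card : ℝ) := by
    intro a b hab
    have hzd : (Finset.univ.filter fun k => M k b = 0).card ≤ d := hcol b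
    have hzn : (Finset.univ.filter fun k => M k b = 0).card ≤ n - 1 := by
      have haZ : a ∉ (Finset.univ.filter fun k => M k b = 0) := by simp [hab]
      have hss : (Finset.univ.filter fun k => M k b = 0) ≠ Finset.univ := by
        intro h; apply haZ; rw [h]; exact Finset.mem_univ a
      have := Finset.card_lt_card (Finset.ssubset_univ_iff.mpr hss)
      rw [Finset.card_univ, Fintype.card_fin] at this
      omega
    rw [good_sample_count M a b hab]
    set z := (Finset.univ.filter fun k => M k b = 0).card with hz
    have hnsplit : n = (z+1) + (n - 1 - z) := by
      have : 0 < n := by omega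
      omega
    have hcast : ((d ^ z * (d+1) ^ (n - 1 - z) : ℕ) : ℝ)
        = (d:ℝ)^z * ((d:ℝ)+1)^(n-1-z) := by push_cast; ring
    rw [hcast]
    have hNc : (N:ℝ) = ((d:ℝ)+1)^n := by rw [hN]; push_cast; ring
    rw [hNc, show ((d:ℝ)+1)^n = ((d:ℝ)+1)^(z+1) * ((d:ℝ)+1)^(n-1-z) from by
      rw [← pow_add, ← hnsplit]]
    have hkey : ((d:ℝ)+1)^(z+1) * p' ≤ (d:ℝ)^z := by
      have h1 : ((d:ℝ)+1)^z ≤ E * (d:ℝ)^z := pow_le_exp_mul_pow hzd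
      have h2 : ((d:ℝ)+1)^(z+1) ≤ E * ((d:ℝ)+1) * (d:ℝ)^z := by
        rw [pow_succ]
        nlinarith [pow_nonneg (by linarith : (0:ℝ) ≤ (d:ℝ)+1) z]
      calc ((d:ℝ)+1)^(z+1) * p' ≤ (E * ((d:ℝ)+1) * (d:ℝ)^z) * p' := by
            exact mul_le_mul_of_nonneg_right h2 hp'0.le
        _ = (E * ((d:ℝ)+1) * p') * (d:ℝ)^z := by ring
        _ = (d:ℝ)^z := by rw [hEdp']; ring
    calc ((d:ℝ)+1)^(z+1) * ((d:ℝ)+1)^(n-1-z) * p'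
        = (((d:ℝ)+1)^(z+1) * p') * ((d:ℝ)+1)^(n-1-z) := by ring
      _ ≤ (d:ℝ)^z * ((d:ℝ)+1)^(n-1-z) := by
          exact mul_le_mul_of_nonneg_right hkey (by positivity)
  -- counting bad tuples
  have hBadcard : ∀ a b : Fin n,
      (Finset.univ.filter fun ω : Fin t → Fin n → Fin (d+1) =>
        ∀ s, ¬ (ω s a = 0 ∧ ∀ k, M k b = 0 → ω s k ≠ 0)).card
      = (N - (Finset.univ.filter fun σ : Fin n → Fin (d+1) =>
          σ a = 0 ∧ ∀ k, M k b = 0 → σ k ≠ 0).card)^t := by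
    intro a b
    rw [card_filter_pi (fun (_ : Fin t) (σ : Fin n → Fin (d+1)) =>
      ¬ (σ a = 0 ∧ ∀ k, M k b = 0 → σ k ≠ 0))]
    rw [Finset.prod_const, Finset.card_univ, Fintype.card_fin]
    have hcardX : (Finset.univ : Finset (Fin n → Fin (d+1))).card = N := by
      rw [Finset.card_univ, hN]
      simp
    rw [Finset.filter_not, Finset.card_sdiff_of_subset (Finset.filter_subset _ _), hcardX]
  -- the union bound
  have hlt : ((Finset.univ.filter fun pr : Fin n × Fin n => M pr.1 pr.2 = 1).biUnion
      (fun pr => Finset.univ.filter fun ω : Fin t → Fin n → Fin (d+1) =>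
        ∀ s, ¬ (ω s pr.1 = 0 ∧ ∀ k, M k pr.2 = 0 → ω s k ≠ 0))).card
      < Fintype.card (Fin t → Fin n → Fin (d+1)) := by
    have hcardΩ : Fintype.card (Fin t → Fin n → Fin (d+1)) = N^t := by
      rw [hN]; simp [Fintype.card_pi]
    rw [hcardΩ]
    have hub := Finset.card_biUnion_le
      (s := Finset.univ.filter fun pr : Fin n × Fin n => M pr.1 pr.2 = 1)
      (t := fun pr => Finset.univ.filter fun ω : Fin t → Fin n → Fin (d+1) =>
        ∀ s, ¬ (ω s pr.1 = 0 ∧ ∀ k, M k pr.2 = 0 → ω s k ≠ 0))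
    refine lt_of_le_of_lt hub ?_
    -- now sum over ones
    have hterm : ∀ pr ∈ (Finset.univ.filter fun pr : Fin n × Fin n => M pr.1 pr.2 = 1),
        (((Finset.univ.filter fun ω : Fin t → Fin n → Fin (d+1) =>
          ∀ s, ¬ (ω s pr.1 = 0 ∧ ∀ k, M k pr.2 = 0 → ω s k ≠ 0)).card : ℝ))
        ≤ ((1 - p') * N)^t := by
      rintro ⟨a, b⟩ hpr
      have hab : M a b = 1 := (Finset.mem_filter.mp hpr).2
      rw [hBadcard a b]
      set G := (Finset.univ.filter fun σ : Fin n → Fin (d+1) =>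
          σ a = 0 ∧ ∀ k, M k b = 0 → σ k ≠ 0).card with hG
      have hGN : G ≤ N := by
        rw [hG]
        calc (Finset.univ.filter fun σ : Fin n → Fin (d+1) =>
            σ a = 0 ∧ ∀ k, M k b = 0 → σ k ≠ 0).card
            ≤ (Finset.univ : Finset (Fin n → Fin (d+1))).card := Finset.card_filter_le _ _
          _ = N := by rw [Finset.card_univ, hN]; simp
      have h1 : ((N - G : ℕ) : ℝ) = (N:ℝ) - G := Nat.cast_sub hGN
      have h2 : (N:ℝ) - G ≤ (1 - p') * N := by
        have := hglb a b hab
        rw [← hG] at this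
        nlinarith
      have h3 : ((N - G : ℕ) : ℝ) ≤ (1 - p') * N := by rw [h1]; exact h2
      calc (((N - G)^t : ℕ) : ℝ) = ((N - G : ℕ) : ℝ)^t := by push_cast; ring
        _ ≤ ((1 - p') * N)^t := pow_le_pow_left₀ (Nat.cast_nonneg _) h3 t
    -- cast to reals
    rw [← Nat.cast_lt (α := ℝ)]
    push_cast
    have hsum_le : ∑ pr ∈ (Finset.univ.filter fun pr : Fin n × Fin n => M pr.1 pr.2 = 1),
        (((Finset.univ.filter fun ω : Fin t → Fin n → Fin (d+1) =>
          ∀ s, ¬ (ω s pr.1 = 0 ∧ ∀ k, M k pr.2 = 0 → ω s k ≠ 0)).card : ℝ))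
        ≤ (n:ℝ)^2 * ((1 - p') * N)^t := by
      calc _ ≤ ((Finset.univ.filter fun pr : Fin n × Fin n => M pr.1 pr.2 = 1).card : ℝ)
            * ((1 - p') * N)^t := by
            have := Finset.sum_le_card_nsmul _ _ _ hterm
            simpa [nsmul_eq_mul] using this
        _ ≤ (n:ℝ)^2 * ((1 - p') * N)^t := by
            have hc : ((Finset.univ.filter fun pr : Fin n × Fin n => M pr.1 pr.2 = 1).card : ℝ)
                ≤ (n:ℝ)^2 := by
              have := Finset.card_filter_le (Finset.univ : Finset (Fin n × Fin n))
                (fun pr => M pr.1 pr.2 = 1)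
              have h2 : (Finset.univ : Finset (Fin n × Fin n)).card = n * n := by simp
              rw [h2] at this
              have : ((Finset.univ.filter fun pr : Fin n × Fin n => M pr.1 pr.2 = 1).card : ℝ)
                  ≤ (n:ℝ) * n := by exact_mod_cast this
              nlinarith
            have hpos : (0:ℝ) ≤ ((1 - p') * N)^t :=
              pow_nonneg (mul_nonneg (by linarith) (Nat.cast_nonneg N)) t
            nlinarith
    refine lt_of_le_of_lt hsum_le ?_
    -- final numeric estimate
    have h1p : (0:ℝ) ≤ 1 - p' := by linarith
    have hexp1 : (1:ℝ) - p' ≤ Real.exp (-p') := by nlinarith [Real.add_one_le_exp (-p')]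
    have hbound : ((1:ℝ) - p')^t ≤ Real.exp (1/2) * ((n:ℝ)⁻¹)^3 := by
      have e1 : ((1:ℝ) - p')^t ≤ Real.exp (-p')^t := pow_le_pow_left₀ h1p hexp1 t
      have e2 : Real.exp (-p')^t = Real.exp ((t:ℝ) * (-p')) := (Real.exp_nat_mul _ t).symm
      have e3 : (t:ℝ) * (-p') ≤ p' - 3*L := by nlinarith
      have e6 : Real.exp (1/2 - 3*L) = Real.exp (1/2) * ((n:ℝ)⁻¹)^3 := by
        rw [sub_eq_add_neg, Real.exp_add]
        congr 1
        rw [show (-(3*L)) = (3:ℕ) * (-L) by push_cast; ring, Real.exp_nat_mul, Real.exp_neg,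
          hLdef, Real.exp_log hn0]
      calc ((1:ℝ) - p')^t ≤ Real.exp ((t:ℝ) * (-p')) := by rw [← e2]; exact e1
        _ ≤ Real.exp (1/2 - 3*L) := Real.exp_le_exp.mpr (by linarith)
        _ = Real.exp (1/2) * ((n:ℝ)⁻¹)^3 := e6
    have hNt : (0:ℝ) < (N:ℝ)^t := by
      have hq : (0:ℝ) < (N:ℝ) := by exact_mod_cast hNpos
      positivity
    have hfin : (n:ℝ)^2 * ((1 - p')^t) < 1 := by
      have hh : (n:ℝ)^2 * (Real.exp (1/2) * ((n:ℝ)⁻¹)^3) = Real.exp (1/2) / n := by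
        field_simp
      have hlast : Real.exp (1/2) / n < 1 := by
        rw [div_lt_one hn0]
        calc Real.exp (1/2) < 2 := exp_half_lt_two
          _ ≤ n := hn2
      have hmono : (n:ℝ)^2 * ((1 - p')^t) ≤ (n:ℝ)^2 * (Real.exp (1/2) * ((n:ℝ)⁻¹)^3) := by
        have : (0:ℝ) ≤ (n:ℝ)^2 := by positivity
        nlinarith [hbound]
      calc (n:ℝ)^2 * ((1 - p')^t) ≤ _ := hmono
        _ = Real.exp (1/2) / n := hh
        _ < 1 := hlast
    calc (n:ℝ)^2 * ((1 - p') * N)^t = ((n:ℝ)^2 * (1 - p')^t) * (N:ℝ)^t := by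
          rw [mul_pow]; ring
      _ < 1 * (N:ℝ)^t := by
          apply mul_lt_mul_of_pos_right _ hNt
          exact hfin
      _ = (N:ℝ)^t := one_mul _
  -- extract good family and build the cover
  obtain ⟨ω, hω⟩ := exists_good_family M hlt
  apply Nat.sInf_le
  refine ⟨fun s => {i | ω s i = 0} ×ˢ {j | ∀ i, ω s i = 0 → M i j = 1}, fun s => ?_, ?_⟩
  · exact ⟨⟨_, _, rfl⟩, fun p hp => hp.2 p.1 hp.1⟩
  · ext ⟨a, b⟩
    simp only [Set.mem_iUnion, Set.mem_prod, Set.mem_setOf_eq, onesOf]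
    constructor
    · rintro ⟨s, ha, hb⟩
      exact hb a ha
    · intro h1
      obtain ⟨s, hs0, hs1⟩ := hω a b h1
      refine ⟨s, hs0, fun i' hi' => ?_⟩
      rcases hM i' b with h0 | hone
      · exact absurd hi' (hs1 i' h0)
      · exact hone
end

section
/- Let M be a 0,1 matrix of size n×m, and let G_M be the conflict graph of M: vertices are the positions (i,j) with M_{i,j}=1, and two vertices (i,j), (k,ℓ) are adjacent if M_{i,ℓ}=0 or M_{k,j}=0. Then the chromatic number of G_M equals the Boolean rank of M. -/
open Function Set

/-- The conflict graph of a `0,1` matrix `M`: vertices are the `1`-entries of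
`M`, and two distinct `1`-entries `(i,j)`, `(k,ℓ)` are adjacent iff
`M i ℓ = 0` or `M k j = 0`. -/
def conflictGraph {n m : ℕ} (M : Matrix (Fin n) (Fin m) ℤ) :
    SimpleGraph {p : Fin n × Fin m // M p.1 p.2 = 1} where
  Adj p q := p ≠ q ∧ (M p.1.1 q.1.2 = 0 ∨ M q.1.1 p.1.2 = 0)
  symm := ⟨fun p q h => ⟨h.1.symm, h.2.symm⟩⟩
  loopless := ⟨fun p h => h.1 rfl⟩


section Proof

variable {n m : ℕ}

/-- Nonemptiness of the cover set: singleton rectangles cover the ones. -/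
lemma coverSet_nonempty (M : Matrix (Fin n) (Fin m) ℤ) :
    {k | ∃ f : Fin k → Set (Fin n × Fin m),
      (∀ t, IsOnesRect M (f t)) ∧ (⋃ t, f t) = onesOf M}.Nonempty := by
  classical
  have : Finite (onesOf M) := Subtype.finite
  obtain ⟨k, ⟨e⟩⟩ := Finite.exists_equiv_fin (onesOf M)
  refine ⟨k, fun t => {(e.symm t : Fin n × Fin m)}, ?_, ?_⟩
  · intro t
    refine ⟨⟨{(e.symm t : Fin n × Fin m).1}, {(e.symm t : Fin n × Fin m).2}, ?_⟩, ?_⟩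
    · ext p; simp [Prod.ext_iff]
    · rintro p rfl; exact (e.symm t).2
  · ext p
    simp only [Set.mem_iUnion, Set.mem_singleton_iff]
    constructor
    · rintro ⟨t, rfl⟩; exact (e.symm t).2
    · intro hp; exact ⟨e ⟨p, hp⟩, by simp⟩

/-- From a cover by `k` rectangles, get a `k`-coloring. -/
lemma colorable_of_cover (M : Matrix (Fin n) (Fin m) ℤ) {k : ℕ}
    (f : Fin k → Set (Fin n × Fin m)) (hrect : ∀ t, IsOnesRect M (f t))
    (hcov : (⋃ t, f t) = onesOf M) :
    (conflictGraph M).Colorable k := by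
  classical
  have hmem : ∀ p : {p : Fin n × Fin m // M p.1 p.2 = 1}, ∃ t, (p : Fin n × Fin m) ∈ f t := by
    intro p
    have : (p : Fin n × Fin m) ∈ onesOf M := p.2
    rw [← hcov] at this
    exact Set.mem_iUnion.mp this
  choose c hc using hmem
  refine ⟨⟨c, ?_⟩⟩
  intro p q hadj hcq
  obtain ⟨hne, h01⟩ := hadj
  have hp := hc p
  have hq := hc q
  rw [hcq] at hp
  obtain ⟨⟨R, C, hRC⟩, hones⟩ := hrect (c q)
  rw [hRC] at hp hq
  have h1 : M (p : Fin n × Fin m).1 (q : Fin n × Fin m).2 = 1 := by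
    have : ((p : Fin n × Fin m).1, (q : Fin n × Fin m).2) ∈ R ×ˢ C :=
      ⟨hp.1, hq.2⟩
    rw [← hRC] at this
    exact hones _ this
  have h2 : M (q : Fin n × Fin m).1 (p : Fin n × Fin m).2 = 1 := by
    have : ((q : Fin n × Fin m).1, (p : Fin n × Fin m).2) ∈ R ×ˢ C :=
      ⟨hq.1, hp.2⟩
    rw [← hRC] at this
    exact hones _ this
  rcases h01 with h | h
  · rw [h1] at h; exact one_ne_zero h
  · rw [h2] at h; exact one_ne_zero h

/-- From a `k`-coloring, get a cover by `k` rectangles. -/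
lemma cover_of_colorable (M : Matrix (Fin n) (Fin m) ℤ) (hM : ZeroOne M) {k : ℕ}
    (hc : (conflictGraph M).Colorable k) :
    ∃ f : Fin k → Set (Fin n × Fin m),
      (∀ t, IsOnesRect M (f t)) ∧ (⋃ t, f t) = onesOf M := by
  classical
  obtain ⟨C⟩ := hc
  set V := {p : Fin n × Fin m // M p.1 p.2 = 1}
  -- class of color t
  set cls : Fin k → Set V := fun t => {p : V | C p = t} with hcls
  set f : Fin k → Set (Fin n × Fin m) := fun t =>
    (Prod.fst ∘ Subtype.val '' cls t) ×ˢ (Prod.snd ∘ Subtype.val '' cls t) with hf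
  have key : ∀ t, ∀ p ∈ cls t, ∀ q ∈ cls t,
      M ((p : V) : Fin n × Fin m).1 ((q : V) : Fin n × Fin m).2 = 1 := by
    intro t p hp q hq
    by_cases hpq : p = q
    · subst hpq; exact p.2
    · have hnadj : ¬ (conflictGraph M).Adj p q := by
        intro hadj
        exact C.valid hadj (hp.trans hq.symm)
      have : ¬ (M ((p : V) : Fin n × Fin m).1 ((q : V) : Fin n × Fin m).2 = 0 ∨
          M ((q : V) : Fin n × Fin m).1 ((p : V) : Fin n × Fin m).2 = 0) := by
        intro h; exact hnadj ⟨hpq, h⟩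
      push_neg at this
      rcases hM ((p : V) : Fin n × Fin m).1 ((q : V) : Fin n × Fin m).2 with h | h
      · exact absurd h this.1
      · exact h
  refine ⟨f, ?_, ?_⟩
  · intro t
    refine ⟨⟨_, _, rfl⟩, ?_⟩
    rintro ⟨i, j⟩ ⟨⟨p, hp, hpi⟩, ⟨q, hq, hqj⟩⟩
    simp only [Function.comp_apply] at hpi hqj
    have := key t p hp q hq
    rw [hpi, hqj] at this
    exact this
  · apply Set.Subset.antisymm
    · rintro x hx
      obtain ⟨t, ht⟩ := Set.mem_iUnion.mp hx
      rcases ht with ⟨⟨p, hp, hpi⟩, ⟨q, hq, hqj⟩⟩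
      simp only [Function.comp_apply] at hpi hqj
      have := key t p hp q hq
      rw [hpi, hqj] at this
      exact this
    · intro x hx
      have hx' : M x.1 x.2 = 1 := hx
      refine Set.mem_iUnion.mpr ⟨C ⟨x, hx'⟩, ?_, ?_⟩
      · exact ⟨⟨x, hx'⟩, rfl, rfl⟩
      · exact ⟨⟨x, hx'⟩, rfl, rfl⟩

end Proof

/-- The chromatic number of the conflict graph of a `0,1` matrix `M` equals the
Boolean rank of `M` (the minimum rectangle cover number). -/
theorem chromaticNumber_conflictGraph {n m : ℕ} (M : Matrix (Fin n) (Fin m) ℤ)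
    (hM : ZeroOne M) :
    (conflictGraph M).chromaticNumber = (coverNum M : ℕ∞) := by
  classical
  apply le_antisymm
  · -- chromatic ≤ coverNum
    obtain ⟨f, hrect, hcov⟩ := Nat.sInf_mem (coverSet_nonempty M)
    exact (colorable_of_cover M f hrect hcov).chromaticNumber_le
  · -- coverNum ≤ chromatic
    have hcol := (conflictGraph M).colorable_chromaticNumber_of_fintype
    obtain ⟨f, hrect, hcov⟩ := cover_of_colorable M hM hcol
    have h1 : coverNum M ≤ ENat.toNat (conflictGraph M).chromaticNumber :=
      Nat.sInf_le ⟨f, hrect, hcov⟩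
    have hne : (conflictGraph M).chromaticNumber ≠ ⊤ :=
      ((conflictGraph M).colorable_of_fintype.chromaticNumber_le.trans_lt
        (ENat.coe_lt_top _)).ne
    calc (coverNum M : ℕ∞) ≤ (ENat.toNat (conflictGraph M).chromaticNumber : ℕ∞) := by
          exact_mod_cast h1
      _ = (conflictGraph M).chromaticNumber := ENat.coe_toNat hne
end
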